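/- Let 𝔖 be an interval system on a set X. Every set obtained from finitely many members of 𝔖 by a finite expression in the operations union, intersection and set difference is the union of a countable pairwise disjoint family of members of 𝔖. -/
import Mathlib


/-- A family `S` of subsets of `X` is an *interval system* if for all `A, B ∈ S` there exist
countable pairwise disjoint families `D₁, D₂ ⊆ S` with `⋃₀ D₁ = A \ B` and `⋃₀ D₂ = A ∩ B`. -/
def IsIntervalSystem {X : Type*} (S : Set (Set X)) : Prop :=
  ∀ A ∈ S, ∀ B ∈ S,
    (∃ D : Set (Set X), D ⊆ S ∧ D.Countable ∧ D.PairwiseDisjoint id ∧ ⋃₀ D = A \ B) ∧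
    (∃ D : Set (Set X), D ⊆ S ∧ D.Countable ∧ D.PairwiseDisjoint id ∧ ⋃₀ D = A ∩ B)

/-- The sets obtained from finitely many members of `S` by a finite expression in the
operations union, intersection and set difference. -/
inductive Constructible {X : Type*} (S : Set (Set X)) : Set X → Prop
  | base {A : Set X} : A ∈ S → Constructible S A
  | union {A B : Set X} : Constructible S A → Constructible S B → Constructible S (A ∪ B)
  | inter {A B : Set X} : Constructible S A → Constructible S B → Constructible S (A ∩ B)
  | sdiff {A B : Set X} : Constructible S A → Constructible S B → Constructible S (A \ B)

/-- `A` is a countable pairwise disjoint union of members of `S`. -/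
def InC {X : Type*} (S : Set (Set X)) (A : Set X) : Prop :=
  ∃ D : Set (Set X), D ⊆ S ∧ D.Countable ∧ D.PairwiseDisjoint id ∧ ⋃₀ D = A

lemma glue {X : Type*} {S T : Set (Set X)} (hTc : T.Countable)
    (hTd : T.PairwiseDisjoint id) (h : ∀ t ∈ T, InC S t) : InC S (⋃₀ T) := by
  choose! D hDS hDc hDd hDu using h
  refine ⟨⋃ t ∈ T, D t, ?_, ?_, ?_, ?_⟩
  · intro s hs
    simp only [Set.mem_iUnion] at hs
    obtain ⟨t, ht, hst⟩ := hs
    exact hDS t ht hst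
  · exact hTc.biUnion fun t ht => hDc t ht
  · intro s hs u hu hsu
    simp only [Set.mem_iUnion] at hs hu
    obtain ⟨t1, ht1, hs1⟩ := hs; obtain ⟨t2, ht2, hu2⟩ := hu
    by_cases h12 : t1 = t2
    · exact hDd t1 ht1 hs1 (h12 ▸ hu2) hsu
    · have hd : Disjoint t1 t2 := hTd ht1 ht2 h12
      have hsub1 : s ⊆ t1 := (hDu t1 ht1) ▸ Set.subset_sUnion_of_mem hs1
      have hsub2 : u ⊆ t2 := (hDu t2 ht2) ▸ Set.subset_sUnion_of_mem hu2
      exact hd.mono hsub1 hsub2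
  · ext x
    simp only [Set.mem_sUnion, Set.mem_iUnion]
    constructor
    · rintro ⟨s, ⟨t, ht, hst⟩, hxs⟩
      exact ⟨t, ht, (hDu t ht) ▸ ⟨s, hst, hxs⟩⟩
    · rintro ⟨t, ht, hxt⟩
      have := (hDu t ht).symm ▸ hxt
      obtain ⟨s, hst, hxs⟩ := this
      exact ⟨s, ⟨t, ht, hst⟩, hxs⟩

lemma glue2 {X : Type*} {S : Set (Set X)} {A B : Set X} (hA : InC S A) (hB : InC S B)
    (hd : Disjoint A B) : InC S (A ∪ B) := by
  have h : InC S (⋃₀ {A, B}) := by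
    refine glue ((Set.countable_singleton B).insert A) ?_ ?_
    · intro s hs t ht hst
      rcases hs with rfl | rfl <;> rcases ht with rfl | rfl <;>
        first | exact absurd rfl hst | exact hd | exact hd.symm
    · rintro t (rfl | rfl)
      exacts [hA, hB]
  rwa [Set.sUnion_pair] at h

lemma glue_image {X : Type*} {S D : Set (Set X)} (f : Set X → Set X) (hf : ∀ d, f d ⊆ d)
    (hDc : D.Countable) (hDd : D.PairwiseDisjoint id) (h : ∀ d ∈ D, InC S (f d)) :
    InC S (⋃ d ∈ D, f d) := by
  have h1 : InC S (⋃₀ (f '' D)) := by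
    refine glue (hDc.image f) ?_ ?_
    · rintro s ⟨d1, hd1, rfl⟩ t ⟨d2, hd2, rfl⟩ hst
      have h12 : d1 ≠ d2 := fun h => hst (h ▸ rfl)
      exact (hDd hd1 hd2 h12).mono (hf d1) (hf d2)
    · rintro t ⟨d, hd, rfl⟩
      exact h d hd
  rwa [Set.sUnion_image] at h1

lemma InC_sdiff {X : Type*} {S : Set (Set X)} {A B : Set X} (hA : InC S A)
    (h : ∀ C ∈ S, InC S (C \ B)) : InC S (A \ B) := by
  obtain ⟨D, hDS, hDc, hDd, rfl⟩ := hA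
  have := glue_image (fun d => d \ B) (fun d => Set.diff_subset) hDc hDd
    (fun d hd => h d (hDS hd))
  have e : (⋃ d ∈ D, d \ B) = ⋃₀ D \ B := by
    ext x; simp [Set.mem_sUnion]; tauto
  rwa [e] at this

lemma InC_inter {X : Type*} {S : Set (Set X)} {A B : Set X} (hA : InC S A)
    (h : ∀ C ∈ S, InC S (C ∩ B)) : InC S (A ∩ B) := by
  obtain ⟨D, hDS, hDc, hDd, rfl⟩ := hA
  have := glue_image (fun d => d ∩ B) (fun d => Set.inter_subset_left) hDc hDd
    (fun d hd => h d (hDS hd))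
  have e : (⋃ d ∈ D, d ∩ B) = ⋃₀ D ∩ B := by
    ext x; simp [Set.mem_sUnion]; tauto
  rwa [e] at this

lemma InC_base {X : Type*} {S : Set (Set X)} {A : Set X} (hA : A ∈ S) : InC S A :=
  ⟨{A}, by simpa, Set.countable_singleton A, Set.pairwiseDisjoint_singleton A id,
    Set.sUnion_singleton A⟩

lemma key {X : Type*} {S : Set (Set X)} (hS : IsIntervalSystem S) {B : Set X}
    (hB : Constructible S B) : ∀ C ∈ S, InC S (C \ B) ∧ InC S (C ∩ B) := by
  induction hB with
  | base hE =>
    intro C hC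
    exact hS C hC _ hE
  | union h1 h2 ih1 ih2 =>
    rename_i B1 B2
    intro C hC
    constructor
    · rw [← Set.diff_diff]
      exact InC_sdiff (ih1 C hC).1 fun C' hC' => (ih2 C' hC').1
    · have e : C ∩ (B1 ∪ B2) = (C ∩ B1) ∪ ((C \ B1) ∩ B2) := by
        ext x; simp; tauto
      have hd : Disjoint (C ∩ B1) ((C \ B1) ∩ B2) := by
        rw [Set.disjoint_left]; intro x hx1 hx2
        exact hx2.1.2 hx1.2
      rw [e]
      exact glue2 ((ih1 C hC).2)
        (InC_inter (ih1 C hC).1 fun C' hC' => (ih2 C' hC').2) hd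
  | inter h1 h2 ih1 ih2 =>
    rename_i B1 B2
    intro C hC
    constructor
    · have e : C \ (B1 ∩ B2) = (C \ B1) ∪ ((C ∩ B1) \ B2) := by
        ext x; simp; tauto
      have hd : Disjoint (C \ B1) ((C ∩ B1) \ B2) := by
        rw [Set.disjoint_left]; intro x hx1 hx2
        exact hx1.2 hx2.1.2
      rw [e]
      exact glue2 ((ih1 C hC).1)
        (InC_sdiff (ih1 C hC).2 fun C' hC' => (ih2 C' hC').1) hd
    · have e : C ∩ (B1 ∩ B2) = (C ∩ B1) ∩ B2 := by
        ext x; simp; tauto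
      rw [e]
      exact InC_inter (ih1 C hC).2 fun C' hC' => (ih2 C' hC').2
  | sdiff h1 h2 ih1 ih2 =>
    rename_i B1 B2
    intro C hC
    constructor
    · have e : C \ (B1 \ B2) = (C \ B1) ∪ ((C ∩ B1) ∩ B2) := by
        ext x; simp; tauto
      have hd : Disjoint (C \ B1) ((C ∩ B1) ∩ B2) := by
        rw [Set.disjoint_left]; intro x hx1 hx2
        exact hx1.2 hx2.1.2
      rw [e]
      exact glue2 ((ih1 C hC).1)
        (InC_inter (ih1 C hC).2 fun C' hC' => (ih2 C' hC').2) hd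
    · have e : C ∩ (B1 \ B2) = (C ∩ B1) \ B2 := by
        ext x; simp; tauto
      rw [e]
      exact InC_sdiff (ih1 C hC).2 fun C' hC' => (ih2 C' hC').1

/-- Let `S` be an interval system on `X`. Every set obtained from finitely many
members of `S` by a finite expression in `∪`, `∩`, `\` is the union of a countable pairwise
disjoint family of members of `S`. -/
theorem statement2 {X : Type*} (S : Set (Set X)) (hS : IsIntervalSystem S)
    (A : Set X) (hA : Constructible S A) :
    ∃ D : Set (Set X), D ⊆ S ∧ D.Countable ∧ D.PairwiseDisjoint id ∧ ⋃₀ D = A := by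
  show InC S A
  induction hA with
  | base hE => exact InC_base hE
  | union h1 h2 ih1 ih2 =>
    rename_i A1 A2
    have e : A1 ∪ A2 = A1 ∪ (A2 \ A1) := Set.union_diff_self.symm
    have hd : Disjoint A1 (A2 \ A1) := by
      rw [Set.disjoint_left]; intro x hx1 hx2; exact hx2.2 hx1
    rw [e]
    exact glue2 ih1 (InC_sdiff ih2 fun C hC => (key hS h1 C hC).1) hd
  | inter h1 h2 ih1 ih2 =>
    exact InC_inter ih1 fun C hC => (key hS h2 C hC).2
  | sdiff h1 h2 ih1 ih2 =>
    exact InC_sdiff ih1 fun C hC => (key hS h2 C hC).1
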